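/- arXiv:2001.10460 — 2 statements merged into one kernel-verified Lean document; each statement's English description precedes it below -/
import Mathlib

section
/- Consider the DenseNet fourth-moment recursion C_L = C_{L-1} · ((1 + (α-1)/L)² + 5α²/(nL²)) with C_0 = 1. Then the ratio of the fourth-moment product to the squared second-moment product satisfies C_L / (∏_{l=1}^L (1+(α-1)/l))² = ∏_{l=1}^L (1 + 5α²/(n(l+α-1)²)) ≤ exp[ (5α²/n) Σ_{l=1}^∞ 1/(l+α-1)² ], which is bounded by exp[C/n] for a constant C depending only on α, uniformly in L. -/
open Finset

set_option maxHeartbeats 1000000 in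
/-- **DenseNet fourth-moment recursion and depth invariance.** Let
`C_0 = 1` and `C_L = C_{L-1} ((1 + (α-1)/L)² + 5α²/(nL²))`. Then
`C_L / (∏_{l=1}^L (1+(α-1)/l))² = ∏_{l=1}^L (1 + 5α²/(n(l+α-1)²))`, which is at most
`exp[(5α²/n) Σ_{l=1}^∞ 1/(l+α-1)²] ≤ exp[C/n]` for a constant `C` depending only
on `α`, uniformly in the depth `L`. -/
theorem densenet_fourth_moment_depth_invariance
    (α : ℝ) (hα : 0 < α) :
    ∃ C : ℝ, 0 < C ∧ ∀ (n : ℕ), 1 ≤ n → ∀ (Cs : ℕ → ℝ), Cs 0 = 1 →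
      (∀ L : ℕ, 1 ≤ L →
        Cs L = Cs (L - 1) * ((1 + (α - 1) / L) ^ 2 + 5 * α ^ 2 / (n * (L : ℝ) ^ 2))) →
      ∀ L : ℕ, 1 ≤ L →
        (Cs L / (∏ l ∈ Icc 1 L, (1 + (α - 1) / l)) ^ 2
            = ∏ l ∈ Icc 1 L, (1 + 5 * α ^ 2 / (n * ((l : ℝ) + α - 1) ^ 2))) ∧
        (∏ l ∈ Icc 1 L, (1 + 5 * α ^ 2 / (n * ((l : ℝ) + α - 1) ^ 2))
            ≤ Real.exp ((5 * α ^ 2 / n) * ∑' l : ℕ, 1 / (((l : ℝ) + 1) + α - 1) ^ 2)) ∧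
        (Real.exp ((5 * α ^ 2 / n) * ∑' l : ℕ, 1 / (((l : ℝ) + 1) + α - 1) ^ 2)
            ≤ Real.exp (C / n)) := by
  -- summability of the series
  have hsum : Summable (fun l : ℕ => 1 / (((l : ℝ) + 1) + α - 1) ^ 2) := by
    have hm : 0 < min α 1 := lt_min hα one_pos
    apply Summable.of_nonneg_of_le (fun l => by positivity)
      (f := fun l : ℕ => (1 / min α 1 ^ 2) * (1 / ((l:ℝ)+1) ^ 2))
    · intro l
      have h1 : min α 1 * ((l:ℝ)+1) ≤ (l:ℝ)+1+α-1 := by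
        rcases min_cases α 1 with ⟨h, hle⟩ | ⟨h, hle⟩ <;> rw [h] <;>
          nlinarith [Nat.cast_nonneg (α := ℝ) l]
      have h2 : (0:ℝ) < min α 1 * ((l:ℝ)+1) := by positivity
      rw [div_mul_div_comm, one_mul]
      apply one_div_le_one_div_of_le (by positivity)
      calc min α 1 ^ 2 * ((l:ℝ)+1)^2 = (min α 1 * ((l:ℝ)+1))^2 := by ring
        _ ≤ ((l:ℝ)+1+α-1)^2 := by nlinarith
    · apply Summable.mul_left
      have := (summable_nat_add_iff 1).mpr (Real.summable_one_div_nat_pow.mpr (le_refl 2))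
      simpa using this
  set S : ℝ := ∑' l : ℕ, 1 / (((l : ℝ) + 1) + α - 1) ^ 2 with hS
  have hSpos : 0 < S := by
    refine Summable.tsum_pos hsum (fun l => by positivity) 0 ?_
    norm_num
    positivity
  refine ⟨5 * α ^ 2 * S, by positivity, ?_⟩
  intro n hn Cs h0 hrec L hL
  have hnR : (0:ℝ) < n := by exact_mod_cast hn
  -- positivity of factors
  have hpos : ∀ l : ℕ, 1 ≤ l → (0:ℝ) < (l:ℝ) + α - 1 := by
    intro l hl
    have : (1:ℝ) ≤ (l:ℝ) := by exact_mod_cast hl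
    linarith
  -- the key product formula, by induction
  have key : ∀ M : ℕ, Cs M = (∏ l ∈ Icc 1 M, (1 + (α - 1) / l)) ^ 2
      * ∏ l ∈ Icc 1 M, (1 + 5 * α ^ 2 / (n * ((l : ℝ) + α - 1) ^ 2)) := by
    intro M
    induction M with
    | zero => simp [h0]
    | succ M ih =>
      have hM1 : 1 ≤ M + 1 := Nat.le_add_left 1 M
      have hrec' := hrec (M+1) hM1
      simp only [Nat.add_sub_cancel] at hrec'
      rw [hrec', ih, prod_Icc_succ_top hM1, prod_Icc_succ_top hM1]
      have hc : ((M+1:ℕ):ℝ) = (M:ℝ)+1 := by push_cast; ring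
      have hMpos : (0:ℝ) < (M:ℝ)+1 := by positivity
      have hMa : (0:ℝ) < (M:ℝ)+1+α-1 := by linarith
      have factor : (1 + (α - 1) / ((M+1:ℕ):ℝ)) ^ 2 + 5 * α ^ 2 / (n * ((M+1:ℕ):ℝ) ^ 2)
          = (1 + (α - 1) / ((M+1:ℕ):ℝ)) ^ 2
            * (1 + 5 * α ^ 2 / (n * (((M+1:ℕ):ℝ) + α - 1) ^ 2)) := by
        rw [hc]
        field_simp
        ring
      rw [factor]
      ring
  refine ⟨?_, ?_, ?_⟩
  · -- divide
    have hPpos : 0 < ∏ l ∈ Icc 1 L, (1 + (α - 1) / (l:ℝ)) := by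
      apply prod_pos
      intro l hl
      have hl1 : 1 ≤ l := (mem_Icc.mp hl).1
      have hlp : (0:ℝ) < l := by exact_mod_cast hl1
      have hla := hpos l hl1
      have heq : (1:ℝ) + (α - 1) / l = ((l:ℝ) + α - 1) / l := by
        field_simp
        ring
      rw [heq]
      positivity
    rw [key L, mul_div_cancel_left₀ _ (by positivity : ((∏ l ∈ Icc 1 L, (1 + (α - 1) / (l:ℝ)))^2) ≠ 0)]
  · -- product ≤ exp
    have hterm : ∀ l ∈ Icc 1 L, (0:ℝ) ≤ 5 * α ^ 2 / (n * ((l : ℝ) + α - 1) ^ 2) := by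
      intro l hl; positivity
    calc ∏ l ∈ Icc 1 L, (1 + 5 * α ^ 2 / (n * ((l : ℝ) + α - 1) ^ 2))
        ≤ ∏ l ∈ Icc 1 L, Real.exp (5 * α ^ 2 / (n * ((l : ℝ) + α - 1) ^ 2)) := by
          apply prod_le_prod
          · intro l hl; have := hterm l hl; linarith
          · intro l hl; have := Real.add_one_le_exp (5 * α ^ 2 / (n * ((l : ℝ) + α - 1) ^ 2))
            linarith
      _ = Real.exp (∑ l ∈ Icc 1 L, 5 * α ^ 2 / (n * ((l : ℝ) + α - 1) ^ 2)) := by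
          rw [Real.exp_sum]
      _ ≤ Real.exp ((5 * α ^ 2 / n) * S) := by
          apply Real.exp_le_exp.mpr
          have hre : ∑ l ∈ Icc 1 L, 5 * α ^ 2 / ((n:ℝ) * ((l : ℝ) + α - 1) ^ 2)
              = (5 * α ^ 2 / n) * ∑ i ∈ range L, 1 / (((i:ℝ) + 1) + α - 1) ^ 2 := by
            rw [← Finset.Ico_add_one_right_eq_Icc, sum_Ico_eq_sum_range, mul_sum, Nat.add_sub_cancel]
            apply sum_congr rfl
            intro i hi
            have hne : ((i:ℝ) + 1 + α - 1) ≠ 0 := ne_of_gt (hpos (i+1) (by omega) |>.trans_eq (by push_cast; ring))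
            push_cast
            rw [add_comm (1:ℝ) (i:ℝ)]
            field_simp
          rw [hre]
          apply mul_le_mul_of_nonneg_left _ (by positivity)
          exact Summable.sum_le_tsum (range L) (fun l _ => by positivity) hsum
  · apply Real.exp_le_exp.mpr
    apply le_of_eq
    rw [div_mul_eq_mul_div, mul_comm]
end

section
/- Let x ∈ (0,1] and n ≥ 1. Then (1 + x/n)^n ≤ e^x ≤ (1 + x/n)^n · e^{x²/n}. Consequently, for the ResNet variance bound with α_l = c/L for all l and fixed c > 0, the quantity ∏_{l=1}^L (1 + ρα_l)²/(1+α_l)² with ρ = (1+5/n)^{m/2} converges to 1 as n → ∞, uniformly in L. -/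
open Finset

/-- **Elementary exponential estimate and depth-uniform convergence.** For
`x ∈ (0,1]` and `n ≥ 1`, `(1 + x/n)^n ≤ e^x ≤ (1 + x/n)^n e^{x²/n}`. Consequently,
for the ResNet variance bound with `α_l = c/L` for all `l` and fixed `c > 0`, the
quantity `∏_{l=1}^L (1 + ρ α_l)²/(1 + α_l)²` with `ρ = (1 + 5/n)^{m/2}` converges
to `1` as `n → ∞`, uniformly in the depth `L`. -/
theorem exp_estimate_and_uniform_convergence :
    (∀ (x : ℝ), 0 < x → x ≤ 1 → ∀ n : ℕ, 1 ≤ n →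
      (1 + x / n) ^ n ≤ Real.exp x ∧
      Real.exp x ≤ (1 + x / n) ^ n * Real.exp (x ^ 2 / n)) ∧
    (∀ (c : ℝ), 0 < c → ∀ m : ℕ, 1 ≤ m → ∀ ε : ℝ, 0 < ε →
      ∃ N : ℕ, ∀ n : ℕ, N ≤ n → ∀ L : ℕ, 1 ≤ L →
        |(∏ l ∈ Icc 1 L,
            ((1 + ((1 + 5 / (n : ℝ)) ^ ((m : ℝ) / 2)) * (c / L)) ^ 2
              / (1 + c / L) ^ 2)) - 1| ≤ ε) := by
  constructor
  · intro x hx hx1 n hn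
    have hn' : (0:ℝ) < n := by
      have : (1:ℝ) ≤ n := by exact_mod_cast hn
      linarith
    set t : ℝ := x / n with ht
    have ht0 : 0 < t := div_pos hx hn'
    have ht1 : t ≤ 1 := by
      rw [ht, div_le_one hn']
      have : (1:ℝ) ≤ n := by exact_mod_cast hn
      linarith
    have hnt : (n:ℝ) * t = x := by rw [ht]; field_simp [hn'.ne']
    constructor
    · calc (1 + t) ^ n ≤ (Real.exp t) ^ n := by
            apply pow_le_pow_left₀ (by linarith)
            linarith [Real.add_one_le_exp t]
        _ = Real.exp x := by rw [← Real.exp_nat_mul, hnt]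
    · have key : Real.exp (t - t ^ 2) ≤ 1 + t := by
        have h1 : -(t - t ^ 2) + 1 ≤ Real.exp (-(t - t ^ 2)) :=
          Real.add_one_le_exp _
        have h2 : Real.exp (t - t ^ 2) * Real.exp (-(t - t ^ 2)) = 1 := by
          rw [← Real.exp_add]; simp
        have hpos : (0:ℝ) < Real.exp (t - t ^ 2) := Real.exp_pos _
        nlinarith [sq_nonneg t, sq_nonneg (1 - t), mul_pos ht0 ht0]
      have hxe : Real.exp x = (Real.exp (t - t ^ 2)) ^ n * Real.exp (x ^ 2 / n) := by
        rw [← Real.exp_nat_mul, ← Real.exp_add]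
        congr 1
        have : (n:ℝ) * t ^ 2 = x ^ 2 / n := by
          field_simp [ht]; rw [← hnt]; ring
        nlinarith [hnt, this]
      rw [hxe]
      apply mul_le_mul_of_nonneg_right _ (Real.exp_pos _).le
      exact pow_le_pow_left₀ (Real.exp_pos _).le key n
  · intro c hc m hm ε hε
    have h5 : Filter.Tendsto (fun n : ℕ => 5 / (n:ℝ)) Filter.atTop (nhds 0) :=
      tendsto_const_div_atTop_nhds_zero_nat 5
    have htend : Filter.Tendsto
        (fun n : ℕ => Real.exp (2 * c * ((1 + 5 / (n:ℝ)) ^ m - 1)))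
        Filter.atTop (nhds 1) := by
      have h1 : Filter.Tendsto (fun n : ℕ => (1:ℝ) + 5 / (n:ℝ)) Filter.atTop (nhds 1) := by
        simpa using h5.const_add (1:ℝ)
      have h2 : Filter.Tendsto (fun n : ℕ => ((1:ℝ) + 5 / (n:ℝ)) ^ m) Filter.atTop (nhds 1) := by
        simpa using h1.pow m
      have h3 : Filter.Tendsto (fun n : ℕ => 2 * c * (((1:ℝ) + 5 / (n:ℝ)) ^ m - 1))
          Filter.atTop (nhds 0) := by
        have := (h2.sub_const 1).const_mul (2 * c)
        simpa using this
      have := (Real.continuous_exp.tendsto 0).comp h3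
      simpa [Function.comp_def] using this
    have hev : ∀ᶠ n : ℕ in Filter.atTop,
        Real.exp (2 * c * ((1 + 5 / (n:ℝ)) ^ m - 1)) ≤ 1 + ε :=
      htend.eventually (eventually_le_nhds (by linarith : (1:ℝ) < 1 + ε))
    obtain ⟨N, hN⟩ := Filter.eventually_atTop.mp hev
    refine ⟨N, fun n hn L hL => ?_⟩
    have hL' : (0:ℝ) < L := by exact_mod_cast hL
    set α : ℝ := c / L with hα
    have hα0 : 0 < α := div_pos hc hL'
    set ρ : ℝ := (1 + 5 / (n:ℝ)) ^ ((m:ℝ) / 2) with hρ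
    have hb0 : (0:ℝ) < 1 + 5 / (n:ℝ) := by positivity
    have hb1 : (1:ℝ) ≤ 1 + 5 / (n:ℝ) := by
      have : (0:ℝ) ≤ 5 / (n:ℝ) := by positivity
      linarith
    have hρ1 : 1 ≤ ρ := by
      rw [hρ, Real.rpow_def_of_pos hb0]
      apply Real.one_le_exp
      have hlog : 0 ≤ Real.log (1 + 5 / (n:ℝ)) := Real.log_nonneg hb1
      positivity
    have hρm : ρ ≤ (1 + 5 / (n:ℝ)) ^ m := by
      rw [hρ]
      calc (1 + 5 / (n:ℝ)) ^ ((m:ℝ) / 2) ≤ (1 + 5 / (n:ℝ)) ^ (m:ℝ) := by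
            apply Real.rpow_le_rpow_of_exponent_le hb1
            have : (0:ℝ) ≤ (m:ℝ) := by positivity
            linarith
        _ = (1 + 5 / (n:ℝ)) ^ m := Real.rpow_natCast _ m
    set F : ℝ := (1 + ρ * α) ^ 2 / (1 + α) ^ 2 with hF
    have h1α : (0:ℝ) < 1 + α := by linarith
    have h1ρα : (0:ℝ) < 1 + ρ * α := by nlinarith
    have hF1 : 1 ≤ F := by
      rw [hF, le_div_iff₀ (by positivity)]
      have : 1 + α ≤ 1 + ρ * α := by nlinarith
      nlinarith
    have hFle : F ≤ Real.exp (2 * (ρ - 1) * α) := by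
      have hkey : 1 + ρ * α ≤ (1 + α) * Real.exp ((ρ - 1) * α) := by
        have := Real.add_one_le_exp ((ρ - 1) * α)
        nlinarith [mul_nonneg (sub_nonneg.mpr hρ1) hα0.le]
      have hE : Real.exp (2 * (ρ - 1) * α) = (Real.exp ((ρ - 1) * α)) ^ 2 := by
        rw [← Real.exp_nat_mul]; norm_num; ring_nf
      rw [hF, hE, div_le_iff₀ (by positivity)]
      calc (1 + ρ * α) ^ 2 ≤ ((1 + α) * Real.exp ((ρ - 1) * α)) ^ 2 :=
            pow_le_pow_left₀ h1ρα.le hkey 2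
        _ = Real.exp ((ρ - 1) * α) ^ 2 * (1 + α) ^ 2 := by ring
    have hprod : (∏ l ∈ Icc 1 L,
        ((1 + ((1 + 5 / (n : ℝ)) ^ ((m : ℝ) / 2)) * (c / L)) ^ 2
          / (1 + c / L) ^ 2)) = F ^ L := by
      rw [Finset.prod_const, Nat.card_Icc]
      simp [hF, hρ, hα]
    rw [hprod]
    have hP1 : 1 ≤ F ^ L := one_le_pow₀ hF1
    have hPle : F ^ L ≤ 1 + ε := by
      have hαL : α * L = c := by
        rw [hα]; field_simp
      calc F ^ L ≤ (Real.exp (2 * (ρ - 1) * α)) ^ L :=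
            pow_le_pow_left₀ (by positivity) hFle L
        _ = Real.exp (2 * (ρ - 1) * α * L) := by
            rw [← Real.exp_nat_mul]; ring_nf
        _ = Real.exp (2 * (ρ - 1) * c) := by
            rw [mul_assoc, hαL]
        _ ≤ Real.exp (2 * c * ((1 + 5 / (n:ℝ)) ^ m - 1)) := by
            apply Real.exp_le_exp.mpr
            nlinarith [sub_nonneg.mpr hρm]
        _ ≤ 1 + ε := hN n hn
    rw [abs_le]
    constructor <;> linarith
end
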